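/- (Second moment bound) For every positive integer d and every ε > 0 there is a constant C = C(d, ε) such that for all positive integers c₁, X₁,…,X_d and all real X with X ≥ ∏_i X_i^i, one has ∫₀¹ |S₁(α)|² dα ≤ C · X^ε · X₁X₂⋯X_d, where S₁(α) = Σ_{x₁∼X₁,…,x_d∼X_d} e(α · c₁ · x₁ x₂² ⋯ x_d^d). -/

import Mathlib

open scoped Real

/-- The exponential sum `S(α) = ∑ e(α · c · x₁ x₂² ⋯ x_d^d)`, where the sum ranges over
tuples `(x₁, …, x_d)` with `xᵢ ∈ [Xᵢ, 2Xᵢ)` and `e(t) = exp(2πit)`. -/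
noncomputable def expSum (d : ℕ) (c : ℕ) (Xs : Fin d → ℕ) (α : ℝ) : ℂ :=
  ∑ x ∈ Fintype.piFinset (fun i => Finset.Ico (Xs i) (2 * Xs i)),
    Complex.exp (2 * Real.pi * Complex.I * (α * (c * ∏ i, x i ^ (i.val + 1) : ℕ)))


lemma divisor_bound {δ : ℝ} (hδ : 0 < δ) :
    ∃ C : ℝ, 1 ≤ C ∧ ∀ n : ℕ, n ≠ 0 → (n.divisors.card : ℝ) ≤ C * (n : ℝ) ^ δ := by
  classical
  set C₀ : ℝ := max 1 (1 / (δ * Real.log 2)) with hC₀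
  have hC₀1 : 1 ≤ C₀ := le_max_left _ _
  have hC₀0 : 0 ≤ C₀ := le_trans zero_le_one hC₀1
  have hlog2 : 0 < Real.log 2 := Real.log_pos (by norm_num)
  set M : ℕ := ⌈(2:ℝ) ^ (1/δ)⌉₊ + 1 with hM
  refine ⟨C₀ ^ M, one_le_pow₀ hC₀1, ?_⟩
  intro n hn
  have key : ∀ p ∈ n.primeFactors,
      ((n.factorization p + 1 : ℕ) : ℝ) ≤
        (if (p:ℝ) ^ δ < 2 then C₀ else 1) * ((p ^ n.factorization p : ℕ) : ℝ) ^ δ := by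
    intro p hp
    have hpp : p.Prime := Nat.prime_of_mem_primeFactors hp
    have hp2 : (2:ℝ) ≤ (p:ℝ) := by exact_mod_cast hpp.two_le
    have hp0 : (0:ℝ) ≤ (p:ℝ) := by positivity
    set a : ℕ := n.factorization p
    have hcast : ((p ^ a : ℕ) : ℝ) ^ δ = (p:ℝ) ^ ((a:ℝ) * δ) := by
      push_cast
      rw [← Real.rpow_natCast (p:ℝ) a, ← Real.rpow_mul hp0]
    rw [hcast]
    have h2p : (2:ℝ) ^ ((a:ℝ)*δ) ≤ (p:ℝ) ^ ((a:ℝ)*δ) :=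
      Real.rpow_le_rpow (by norm_num) hp2 (by positivity)
    split_ifs with hsmall
    · have hexp : 1 + (a:ℝ) * (δ * Real.log 2) ≤ (2:ℝ) ^ ((a:ℝ) * δ) := by
        rw [Real.rpow_def_of_pos (by norm_num)]
        calc 1 + (a:ℝ) * (δ * Real.log 2) = Real.log 2 * ((a:ℝ) * δ) + 1 := by ring
        _ ≤ Real.exp (Real.log 2 * ((a:ℝ) * δ)) := Real.add_one_le_exp _
      have hC₀d : 1 ≤ C₀ * (δ * Real.log 2) := by
        have h1 : 1 / (δ * Real.log 2) ≤ C₀ := le_max_right _ _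
        have hd2 : 0 < δ * Real.log 2 := by positivity
        rw [div_le_iff₀ hd2] at h1
        linarith
      calc ((a + 1 : ℕ) : ℝ) = (a:ℝ) + 1 := by push_cast; ring
        _ ≤ C₀ * (1 + (a:ℝ) * (δ * Real.log 2)) := by nlinarith [hC₀1, Nat.cast_nonneg (α := ℝ) a]
        _ ≤ C₀ * ((2:ℝ) ^ ((a:ℝ) * δ)) := by nlinarith
        _ ≤ C₀ * ((p:ℝ) ^ ((a:ℝ)*δ)) := by nlinarith [Real.rpow_pos_of_pos (show (0:ℝ)<2 by norm_num) ((a:ℝ)*δ)]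
    · push_neg at hsmall
      have h1 : ((a + 1 : ℕ) : ℝ) ≤ (2:ℝ) ^ a := by exact_mod_cast Nat.lt_two_pow_self (n := a)
      have h2 : ((p:ℝ) ^ δ) ^ a = (p:ℝ) ^ ((a:ℝ)*δ) := by
        rw [mul_comm (a:ℝ) δ, Real.rpow_mul hp0, Real.rpow_natCast]
      rw [one_mul, ← h2]
      calc ((a + 1 : ℕ) : ℝ) ≤ (2:ℝ) ^ a := h1
        _ ≤ ((p:ℝ)^δ)^a := pow_le_pow_left₀ (by norm_num) hsmall a
  -- assemble
  have hτ : (n.divisors.card : ℝ) = ∏ p ∈ n.primeFactors, ((n.factorization p + 1 : ℕ) : ℝ) := by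
    rw [Nat.card_divisors hn]; push_cast; ring
  have hn' : ((n:ℝ)) ^ δ = ∏ p ∈ n.primeFactors, ((p ^ n.factorization p : ℕ) : ℝ) ^ δ := by
    rw [Real.finset_prod_rpow _ _ (fun i _ => by positivity)]
    congr 1
    rw [← Nat.cast_prod]
    congr 1
    conv_lhs => rw [← Nat.factorization_prod_pow_eq_self hn]
    rw [Nat.factorization_prod_pow_eq_self hn]
    conv_lhs => rw [← Nat.factorization_prod_pow_eq_self hn]
    rfl
  have step1 : (n.divisors.card : ℝ) ≤
      ∏ p ∈ n.primeFactors, ((if (p:ℝ) ^ δ < 2 then C₀ else 1) * ((p ^ n.factorization p : ℕ) : ℝ) ^ δ) := by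
    rw [hτ]
    exact Finset.prod_le_prod (fun i _ => by positivity) key
  rw [Finset.prod_mul_distrib] at step1
  have step2 : ∏ p ∈ n.primeFactors, (if (p:ℝ) ^ δ < 2 then C₀ else 1) ≤ C₀ ^ M := by
    rw [Finset.prod_ite, Finset.prod_const, Finset.prod_const, one_pow, mul_one]
    apply pow_le_pow_right₀ hC₀1
    have hsub : (n.primeFactors.filter (fun p : ℕ => (p:ℝ) ^ δ < 2)) ⊆ Finset.range M := by
      intro p hp
      simp only [Finset.mem_filter] at hp
      obtain ⟨hp1, hp2⟩ := hp
      have hpp : p.Prime := Nat.prime_of_mem_primeFactors hp1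
      have hp0 : (0:ℝ) < (p:ℝ) := by exact_mod_cast hpp.pos
      have : (p:ℝ) < (2:ℝ) ^ (1/δ) := by
        have := Real.rpow_lt_rpow (le_of_lt (Real.rpow_pos_of_pos hp0 δ)) hp2 (by positivity : (0:ℝ) < 1/δ)
        rwa [← Real.rpow_mul hp0.le, mul_one_div, div_self hδ.ne', Real.rpow_one] at this
      have : (p:ℝ) < (⌈(2:ℝ)^(1/δ)⌉₊ : ℝ) + 1 := lt_of_lt_of_le this (by linarith [Nat.le_ceil ((2:ℝ)^(1/δ))])
      rw [Finset.mem_range, hM]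
      exact_mod_cast this
    calc (n.primeFactors.filter (fun p : ℕ => (p:ℝ) ^ δ < 2)).card ≤ (Finset.range M).card :=
        Finset.card_le_card hsub
      _ = M := Finset.card_range M
  calc (n.divisors.card : ℝ) ≤ _ := step1
    _ ≤ C₀ ^ M * (n:ℝ)^δ := by
        rw [hn']
        exact mul_le_mul_of_nonneg_right step2 (Finset.prod_nonneg fun i _ => by positivity)


open Complex in
lemma orth (m : ℤ) : (∫ α in (0:ℝ)..1, Complex.exp (2 * Real.pi * Complex.I * (α * m)))
    = if m = 0 then 1 else 0 := by
  split_ifs with hm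
  · subst hm
    simp
  · have hc : (2 * Real.pi * Complex.I * m) ≠ 0 := by
      simp [Real.pi_ne_zero, Complex.I_ne_zero, hm]
    have : ∀ α : ℝ, Complex.exp (2 * Real.pi * Complex.I * (α * m))
        = Complex.exp ((2 * Real.pi * Complex.I * m) * α) := by
      intro α; ring_nf
    rw [intervalIntegral.integral_congr (fun α _ => this α)]
    rw [integral_exp_mul_complex hc]
    have h1 : (2 * Real.pi * Complex.I * m) * (1:ℝ) = (m:ℂ) * (2 * Real.pi * Complex.I) := by
      push_cast; ring
    have h0 : (2 * Real.pi * Complex.I * m) * ((0:ℝ):ℂ) = 0 := by push_cast; ring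
    rw [h1, h0, Complex.exp_int_mul_two_pi_mul_I, Complex.exp_zero, sub_self, zero_div]

lemma integral_eq_count (d c₁ : ℕ) (Xs : Fin d → ℕ) (hc : 0 < c₁) :
    (∫ α in (0:ℝ)..1, ‖expSum d c₁ Xs α‖ ^ 2) =
      ∑ x ∈ Fintype.piFinset (fun i => Finset.Ico (Xs i) (2 * Xs i)),
        (((Fintype.piFinset (fun i => Finset.Ico (Xs i) (2 * Xs i))).filter
          (fun y => ∏ i, y i ^ (i.val + 1) = ∏ i, x i ^ (i.val + 1))).card : ℝ) := by
  classical
  set A := Fintype.piFinset (fun i => Finset.Ico (Xs i) (2 * Xs i)) with hA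
  set P : (Fin d → ℕ) → ℕ := fun x => ∏ i, x i ^ (i.val + 1) with hP
  -- pointwise identity
  have hpt : ∀ α : ℝ, ((‖expSum d c₁ Xs α‖ ^ 2 : ℝ) : ℂ)
      = ∑ x ∈ A, ∑ y ∈ A,
          Complex.exp (2 * Real.pi * Complex.I * (α * (((((c₁ * P x : ℕ) : ℤ) - ((c₁ * P y : ℕ) : ℤ)) : ℤ) : ℂ))) := by
    intro α
    have h1 : ((‖expSum d c₁ Xs α‖ ^ 2 : ℝ) : ℂ)
        = expSum d c₁ Xs α * (starRingEnd ℂ) (expSum d c₁ Xs α) := by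
      rw [Complex.mul_conj]
      norm_cast
      simp [Complex.normSq_eq_norm_sq]
    rw [h1]
    rw [expSum, map_sum, Finset.sum_mul_sum]
    refine Finset.sum_congr rfl fun x hx => Finset.sum_congr rfl fun y hy => ?_
    rw [← Complex.exp_conj, ← Complex.exp_add]
    congr 1
    simp only [map_mul, Complex.conj_ofReal, Complex.conj_I, map_ofNat, Complex.conj_natCast,
      map_natCast, hP]
    push_cast
    ring
  -- integrate
  have hcont : ∀ (m : ℤ), Continuous
      (fun α : ℝ => Complex.exp (2 * Real.pi * Complex.I * ((α:ℂ) * m))) := by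
    intro m
    exact Complex.continuous_exp.comp (continuous_const.mul
      (Complex.continuous_ofReal.mul continuous_const))
  have hint : ∀ (m : ℤ), IntervalIntegrable
      (fun α : ℝ => Complex.exp (2 * Real.pi * Complex.I * ((α:ℂ) * m))) MeasureTheory.volume 0 1 :=
    fun m => (hcont m).intervalIntegrable 0 1
  have hint2 : ∀ x : Fin d → ℕ, IntervalIntegrable
      (fun α : ℝ => ∑ y ∈ A, Complex.exp (2 * Real.pi * Complex.I *
        ((α:ℂ) * (((((c₁ * P x : ℕ) : ℤ) - ((c₁ * P y : ℕ) : ℤ)) : ℤ) : ℂ)))) MeasureTheory.volume 0 1 :=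
    fun x => (continuous_finset_sum _ (fun y _ => hcont _)).intervalIntegrable 0 1
  have h2 : ((∫ α in (0:ℝ)..1, ‖expSum d c₁ Xs α‖ ^ 2 : ℝ) : ℂ)
      = ∑ x ∈ A, ∑ y ∈ A, (if ((c₁ * P x : ℕ) : ℤ) - ((c₁ * P y : ℕ) : ℤ) = 0 then (1:ℂ) else 0) := by
    rw [← intervalIntegral.integral_ofReal]
    rw [intervalIntegral.integral_congr (fun α _ => hpt α)]
    rw [intervalIntegral.integral_finset_sum (fun x _ => hint2 x)]
    refine Finset.sum_congr rfl fun x hx => ?_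
    rw [intervalIntegral.integral_finset_sum (fun y _ => hint _)]
    exact Finset.sum_congr rfl fun y hy => orth _
  have h3 : ∀ x y : Fin d → ℕ,
      (((c₁ * P x : ℕ) : ℤ) - ((c₁ * P y : ℕ) : ℤ) = 0) ↔ (P y = P x) := by
    intro x y
    rw [sub_eq_zero]
    constructor
    · intro h
      have : c₁ * P x = c₁ * P y := Nat.cast_inj.mp h
      exact (Nat.eq_of_mul_eq_mul_left hc this).symm
    · intro h; rw [h]
  have h4 : ∑ x ∈ A, ∑ y ∈ A, (if ((c₁ * P x : ℕ) : ℤ) - ((c₁ * P y : ℕ) : ℤ) = 0 then (1:ℂ) else 0)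
      = ∑ x ∈ A, ((A.filter (fun y => P y = P x)).card : ℂ) := by
    refine Finset.sum_congr rfl fun x hx => ?_
    rw [show (∑ y ∈ A, if ((c₁ * P x : ℕ) : ℤ) - ((c₁ * P y : ℕ) : ℤ) = 0 then (1:ℂ) else 0)
        = ∑ y ∈ A, if P y = P x then (1:ℂ) else 0 from
      Finset.sum_congr rfl fun y _ => if_congr (h3 x y) rfl rfl]
    rw [Finset.sum_boole]
  rw [h4] at h2
  have := Complex.ofReal_injective (by push_cast at h2 ⊢; exact h2 :
    ((∫ α in (0:ℝ)..1, ‖expSum d c₁ Xs α‖ ^ 2 : ℝ) : ℂ)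
      = ((∑ x ∈ A, ((A.filter (fun y => P y = P x)).card : ℝ) : ℝ) : ℂ))
  exact this

lemma count_bound (k : ℕ) (Xs : Fin (k+1) → ℕ) (hXs : ∀ i, 0 < Xs i) (N : ℕ) :
    ((Fintype.piFinset fun i => Finset.Ico (Xs i) (2 * Xs i)).filter
      (fun y => ∏ i, y i ^ (i.val + 1) = N)).card ≤ N.divisors.card ^ k := by
  classical
  set A := Fintype.piFinset fun i : Fin (k+1) => Finset.Ico (Xs i) (2 * Xs i) with hA
  have hpos : ∀ y ∈ A, ∀ i, 0 < y i := by
    intro y hy i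
    rw [hA, Fintype.mem_piFinset] at hy
    have := hy i
    rw [Finset.mem_Ico] at this
    exact lt_of_lt_of_le (hXs i) this.1
  calc (A.filter (fun y => ∏ i, y i ^ (i.val + 1) = N)).card
      ≤ (Fintype.piFinset fun _ : Fin k => N.divisors).card := ?_
    _ = N.divisors.card ^ k := by
        rw [Fintype.card_piFinset]
        simp [Finset.prod_const]
  apply Finset.card_le_card_of_injOn (fun y (i : Fin k) => y i.succ)
  · intro y hy
    rw [Finset.mem_coe, Finset.mem_filter] at hy
    obtain ⟨hyA, hyP⟩ := hy
    rw [Finset.mem_coe, Fintype.mem_piFinset]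
    intro j
    rw [Nat.mem_divisors]
    refine ⟨?_, ?_⟩
    · exact dvd_trans (dvd_pow_self _ (Nat.succ_ne_zero _))
        (hyP ▸ Finset.dvd_prod_of_mem _ (Finset.mem_univ j.succ))
    · rw [← hyP]
      exact (Finset.prod_pos fun i _ => pow_pos (hpos y hyA i) _).ne'
  · intro y hy y' hy' hf
    rw [Finset.mem_coe, Finset.mem_filter] at hy hy'
    have hsucc : ∀ j : Fin k, y j.succ = y' j.succ := fun j => congrFun hf j
    funext i
    refine Fin.cases ?_ (fun j => hsucc j) i
    have hsplit : ∀ z : Fin (k+1) → ℕ, ∏ i, z i ^ (i.val + 1)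
        = z 0 * ∏ j : Fin k, z j.succ ^ (j.succ.val + 1) := by
      intro z
      rw [Fin.prod_univ_succ]
      simp [pow_one]
    have hR : ∏ j : Fin k, y j.succ ^ (j.succ.val + 1) = ∏ j : Fin k, y' j.succ ^ (j.succ.val + 1) :=
      Finset.prod_congr rfl fun j _ => by rw [hsucc j]
    have hRpos : 0 < ∏ j : Fin k, y' j.succ ^ (j.succ.val + 1) :=
      Finset.prod_pos fun j _ => pow_pos (hpos y' hy'.1 j.succ) _
    have heq : y 0 * ∏ j : Fin k, y' j.succ ^ (j.succ.val + 1)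
        = y' 0 * ∏ j : Fin k, y' j.succ ^ (j.succ.val + 1) := by
      rw [← hR, ← hsplit y, hy.2, ← hy'.2, hsplit y', hR]
    exact Nat.eq_of_mul_eq_mul_right hRpos heq

theorem second_moment_bound (d : ℕ) (hd : 0 < d) (ε : ℝ) (hε : 0 < ε) :
    ∃ C : ℝ, ∀ (c₁ : ℕ) (Xs : Fin d → ℕ) (X : ℝ),
      0 < c₁ → (∀ i, 0 < Xs i) → ((∏ i, Xs i ^ (i.val + 1) : ℕ) : ℝ) ≤ X →
      (∫ α in (0:ℝ)..1, ‖expSum d c₁ Xs α‖ ^ 2) ≤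
        C * X ^ ε * ((∏ i, Xs i : ℕ) : ℝ) := by
  classical
  obtain ⟨k, rfl⟩ : ∃ k, d = k + 1 := ⟨d - 1, (Nat.succ_pred_eq_of_pos hd).symm⟩
  have hδ : (0:ℝ) < ε / (k + 1) := by positivity
  obtain ⟨C₁, hC₁1, hC₁⟩ := divisor_bound hδ
  set s : ℕ := ∑ i : Fin (k+1), (i.val + 1) with hs
  refine ⟨C₁ ^ (k+1) * ((2:ℝ) ^ s) ^ ε, ?_⟩
  intro c₁ Xs X hc hXs hX
  rw [integral_eq_count _ _ _ hc]
  set A := Fintype.piFinset fun i : Fin (k+1) => Finset.Ico (Xs i) (2 * Xs i) with hA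
  set P : (Fin (k+1) → ℕ) → ℕ := fun x => ∏ i, x i ^ (i.val + 1) with hP
  have hX1 : (1:ℝ) ≤ X := by
    refine le_trans ?_ hX
    have : (1:ℕ) ≤ ∏ i, Xs i ^ (i.val + 1) :=
      Nat.one_le_iff_ne_zero.mpr (Finset.prod_pos fun i _ => pow_pos (hXs i) _).ne'
    exact_mod_cast this
  have hXpos : (0:ℝ) < X := lt_of_lt_of_le one_pos hX1
  -- per-x bound
  have hper : ∀ x ∈ A, ((A.filter (fun y => P y = P x)).card : ℝ)
      ≤ C₁ ^ (k+1) * (((2:ℝ) ^ s) ^ ε * X ^ ε) := by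
    intro x hx
    have hxpos : ∀ i, 0 < x i := by
      intro i
      rw [hA, Fintype.mem_piFinset] at hx
      have := hx i
      rw [Finset.mem_Ico] at this
      exact lt_of_lt_of_le (hXs i) this.1
    set N : ℕ := P x with hN
    have hN0 : 0 < N := Finset.prod_pos fun i _ => pow_pos (hxpos i) _
    have hN1 : (1:ℝ) ≤ (N:ℝ) := by exact_mod_cast hN0
    -- N ≤ 2^s * X
    have hNle : (N:ℝ) ≤ (2:ℝ) ^ s * X := by
      have h1 : N ≤ 2 ^ s * ∏ i, Xs i ^ (i.val + 1) := by
        calc N = ∏ i, x i ^ (i.val + 1) := rfl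
          _ ≤ ∏ i, (2 * Xs i) ^ (i.val + 1) := by
              refine Finset.prod_le_prod (fun i _ => Nat.zero_le _) (fun i _ => ?_)
              refine Nat.pow_le_pow_left ?_ _
              rw [hA, Fintype.mem_piFinset] at hx
              have := hx i
              rw [Finset.mem_Ico] at this
              exact le_of_lt this.2
          _ = (∏ i : Fin (k+1), 2 ^ (i.val + 1)) * ∏ i, Xs i ^ (i.val + 1) := by
              rw [← Finset.prod_mul_distrib]
              exact Finset.prod_congr rfl fun i _ => mul_pow 2 (Xs i) _
          _ = 2 ^ s * ∏ i, Xs i ^ (i.val + 1) := by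
              rw [Finset.prod_pow_eq_pow_sum]
      calc (N:ℝ) ≤ ((2 ^ s * ∏ i, Xs i ^ (i.val + 1) : ℕ) : ℝ) := by exact_mod_cast h1
        _ = (2:ℝ) ^ s * ((∏ i, Xs i ^ (i.val + 1) : ℕ) : ℝ) := by push_cast; ring
        _ ≤ (2:ℝ) ^ s * X := by
            refine mul_le_mul_of_nonneg_left hX (by positivity)
    -- divisor chain
    have hcount : (A.filter (fun y => P y = P x)).card ≤ N.divisors.card ^ k := by
      have := count_bound k Xs hXs N
      refine le_trans (le_of_eq ?_) this
      congr 1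
    have hτ : (N.divisors.card : ℝ) ≤ C₁ * (N:ℝ) ^ (ε / (k+1)) := hC₁ N hN0.ne'
    have hτ0 : (0:ℝ) ≤ (N.divisors.card : ℝ) := Nat.cast_nonneg _
    have hchain : ((N.divisors.card : ℝ)) ^ k ≤ C₁ ^ k * (N:ℝ) ^ ((ε / (k+1)) * k) := by
      calc ((N.divisors.card : ℝ)) ^ k ≤ (C₁ * (N:ℝ) ^ (ε / (k+1))) ^ k :=
          pow_le_pow_left₀ hτ0 hτ k
        _ = C₁ ^ k * ((N:ℝ) ^ (ε / (k+1))) ^ k := mul_pow _ _ _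
        _ = C₁ ^ k * (N:ℝ) ^ ((ε / (k+1)) * k) := by
            rw [← Real.rpow_natCast ((N:ℝ) ^ (ε / (k+1))) k, ← Real.rpow_mul (by positivity)]
    have hexp : (ε / (k+1)) * k ≤ ε := by
      rw [div_mul_eq_mul_div, div_le_iff₀ (by positivity : (0:ℝ) < (k:ℝ)+1)]
      nlinarith [hε.le, Nat.cast_nonneg (α := ℝ) k]
    have hNδε : (N:ℝ) ^ ((ε / (k+1)) * k) ≤ (N:ℝ) ^ ε :=
      Real.rpow_le_rpow_of_exponent_le hN1 hexp
    have hNXε : (N:ℝ) ^ ε ≤ ((2:ℝ) ^ s) ^ ε * X ^ ε := by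
      rw [← Real.mul_rpow (by positivity) hXpos.le]
      exact Real.rpow_le_rpow (by positivity) hNle hε.le
    calc ((A.filter (fun y => P y = P x)).card : ℝ) ≤ ((N.divisors.card : ℝ)) ^ k := by
          exact_mod_cast hcount
      _ ≤ C₁ ^ k * (N:ℝ) ^ ((ε / (k+1)) * k) := hchain
      _ ≤ C₁ ^ (k+1) * (N:ℝ) ^ ((ε / (k+1)) * k) := by
          refine mul_le_mul_of_nonneg_right (pow_le_pow_right₀ hC₁1 (Nat.le_succ k)) ?_
          positivity
      _ ≤ C₁ ^ (k+1) * (N:ℝ) ^ ε := by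
          refine mul_le_mul_of_nonneg_left hNδε (by positivity)
      _ ≤ C₁ ^ (k+1) * (((2:ℝ) ^ s) ^ ε * X ^ ε) := by
          refine mul_le_mul_of_nonneg_left (le_trans hNXε le_rfl) (by positivity)
  -- sum up
  have hcardA : (A.card : ℝ) = ((∏ i, Xs i : ℕ) : ℝ) := by
    rw [hA, Fintype.card_piFinset]
    congr 1
    refine Finset.prod_congr rfl fun i _ => ?_
    rw [Nat.card_Ico]
    omega
  calc ∑ x ∈ A, ((A.filter (fun y => P y = P x)).card : ℝ)
      ≤ ∑ x ∈ A, C₁ ^ (k+1) * (((2:ℝ) ^ s) ^ ε * X ^ ε) := Finset.sum_le_sum hper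
    _ = (A.card : ℝ) * (C₁ ^ (k+1) * (((2:ℝ) ^ s) ^ ε * X ^ ε)) := by
        rw [Finset.sum_const, nsmul_eq_mul]
    _ = C₁ ^ (k+1) * ((2:ℝ) ^ s) ^ ε * X ^ ε * ((∏ i, Xs i : ℕ) : ℝ) := by
        rw [hcardA]; ring
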